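/- If π ∈ S̃_n and i ∈ [n] is a descent of π (i.e. π(i) > π(i+1)), then the code of π s_i is obtained from the code c(π) = (c_1, ..., c_n) by replacing the entries in positions i and i+1 (indices mod n) by c_{i+1} and c_i − 1 respectively. -/

import Mathlib

open scoped TensorProduct

/-- Membership in the affine symmetric group `S̃_n`, viewed inside `Equiv.Perm ℤ`. -/
def IsAffine (n : ℕ) (π : Equiv.Perm ℤ) : Prop :=
  (∀ i : ℤ, π (i + n) = π i + n) ∧
  (∑ i ∈ Finset.Icc (1 : ℤ) (n : ℤ), π i) = ∑ i ∈ Finset.Icc (1 : ℤ) (n : ℤ), i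

/-- The underlying function of the affine reflection `t_{ij}`. -/
def affTFun (n : ℕ) (i j k : ℤ) : ℤ :=
  if (k - i) % (n : ℤ) = 0 then k - i + j
  else if (k - j) % (n : ℤ) = 0 then k - j + i
  else k

theorem affTFun_involutive {n : ℕ} {i j : ℤ} (h : ¬ (j - i) % (n : ℤ) = 0) :
    Function.Involutive (affTFun n i j) := by
  have key : ∀ a : ℤ, a % (n : ℤ) = 0 ↔ (n : ℤ) ∣ a :=
    fun a => (@Int.dvd_iff_emod_eq_zero (n : ℤ) a).symm
  rw [key] at h
  intro k
  by_cases h1 : (n : ℤ) ∣ (k - i)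
  · have h2 : ¬ (n : ℤ) ∣ (k - i + j - i) := by
      intro hd
      apply h
      have h5 : j - i = (k - i + j - i) - (k - i) := by ring
      rw [h5]
      exact dvd_sub hd h1
    have h3 : (n : ℤ) ∣ (k - i + j - j) := by
      have h5 : k - i + j - j = k - i := by ring
      rw [h5]; exact h1
    have e1 : affTFun n i j k = k - i + j := by simp [affTFun, key, h1]
    have e2 : affTFun n i j (k - i + j) = k := by
      simp only [affTFun, key]
      rw [if_neg h2, if_pos h3]
      ring
    rw [e1, e2]
  · by_cases h2 : (n : ℤ) ∣ (k - j)
    · have h3 : (n : ℤ) ∣ (k - j + i - i) := by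
        have h5 : k - j + i - i = k - j := by ring
        rw [h5]; exact h2
      have e1 : affTFun n i j k = k - j + i := by simp [affTFun, key, h1, h2]
      have e2 : affTFun n i j (k - j + i) = k := by
        simp only [affTFun, key]
        rw [if_pos h3]
        ring
      rw [e1, e2]
    · have e1 : affTFun n i j k = k := by simp [affTFun, key, h1, h2]
      rw [e1, e1]

/-- The affine reflection `t_{ij}` (interpreted as the identity when `i ≡ j (mod n)`). -/
noncomputable def affT (n : ℕ) (i j : ℤ) : Equiv.Perm ℤ :=
  if h : (j - i) % (n : ℤ) = 0 then 1
  else Function.Involutive.toPerm _ (affTFun_involutive h)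

/-- The simple reflection `s_i = t_{i,i+1}` of `S̃_n`. -/
noncomputable def affS (n : ℕ) (i : ℤ) : Equiv.Perm ℤ := affT n i (i + 1)

/-- Coxeter length: minimal length of a word in the simple reflections `s_1, …, s_n`. -/
noncomputable def wordLength (n : ℕ) (π : Equiv.Perm ℤ) : ℕ :=
  sInf {l : ℕ | ∃ w : List ℤ,
    (∀ x ∈ w, 1 ≤ x ∧ x ≤ (n : ℤ)) ∧ (w.map (affS n)).prod = π ∧ w.length = l}

/-- The set of inversions of `π`, up to the diagonal translation relation. -/
def InvPair (π : Equiv.Perm ℤ) : Type :=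
  {p : ℤ × ℤ // p.1 < p.2 ∧ π p.2 < π p.1}

/-- The number of equivalence classes of inversions of `π` under
`(a,b) ~ (a + mn, b + mn)`. -/
noncomputable def invLength (n : ℕ) (π : Equiv.Perm ℤ) : ℕ :=
  Nat.card (Quot fun p q : InvPair π =>
    ∃ m : ℤ, q.1.1 = p.1.1 + m * n ∧ q.1.2 = p.1.2 + m * n)

/-- Entry `c_i` of the code of an affine permutation. -/
noncomputable def codeEntry (π : Equiv.Perm ℤ) (i : ℤ) : ℕ :=
  Nat.card {j : ℤ // i < j ∧ π j < π i}

/-- Entry `ĉ_i` of the involution code of an affine involution. -/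
noncomputable def icodeEntry (z : Equiv.Perm ℤ) (i : ℤ) : ℕ :=
  Nat.card {j : ℤ // i < j ∧ z j < z i ∧ z j ≤ i}

/-- `ℓ'(z)`: `n` minus the number of orbits of `z` acting on `ℤ/nℤ`. -/
noncomputable def lprime (n : ℕ) (z : Equiv.Perm ℤ) : ℕ :=
  n - Nat.card (Quot fun a b : ZMod n => ((z (a.val : ℤ) : ℤ) : ZMod n) = b)

/-- The characterizing properties of the Demazure (0-Hecke) product on `S̃_n`:
closure, associativity, `s_i ∘ s_i = s_i`, and agreement with the group product
on length-additive factorizations. -/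
def IsDemazure (n : ℕ) (D : Equiv.Perm ℤ → Equiv.Perm ℤ → Equiv.Perm ℤ) : Prop :=
  (∀ a b, IsAffine n a → IsAffine n b → IsAffine n (D a b)) ∧
  (∀ a b c, IsAffine n a → IsAffine n b → IsAffine n c →
    D (D a b) c = D a (D b c)) ∧
  (∀ i : ℤ, D (affS n i) (affS n i) = affS n i) ∧
  (∀ a b, IsAffine n a → IsAffine n b →
    wordLength n (a * b) = wordLength n a + wordLength n b → D a b = a * b)

/-- The set of Hecke atoms `{π : π⁻¹ ∘ π = z}`. -/
def AHecke (n : ℕ) (D : Equiv.Perm ℤ → Equiv.Perm ℤ → Equiv.Perm ℤ)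
    (z : Equiv.Perm ℤ) : Set (Equiv.Perm ℤ) :=
  {π | IsAffine n π ∧ D π⁻¹ π = z}

/-- The set of atoms: minimal-length Hecke atoms. -/
def DemAtoms (n : ℕ) (D : Equiv.Perm ℤ → Equiv.Perm ℤ → Equiv.Perm ℤ)
    (z : Equiv.Perm ℤ) : Set (Equiv.Perm ℤ) :=
  {π | π ∈ AHecke n D z ∧ ∀ σ ∈ AHecke n D z, wordLength n π ≤ wordLength n σ}

/-- The Bruhat covering relation on `S̃_n`. -/
def BruhatCov (n : ℕ) (a b : Equiv.Perm ℤ) : Prop :=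
  (∃ i j : ℤ, i < j ∧ (j - i) % (n : ℤ) ≠ 0 ∧ b = a * affT n i j) ∧
  wordLength n b = wordLength n a + 1

/-- The Bruhat order on `S̃_n`. -/
def BruhatLE (n : ℕ) : Equiv.Perm ℤ → Equiv.Perm ℤ → Prop :=
  Relation.ReflTransGen (BruhatCov n)

/-- The covering relation of the Bruhat order restricted to involutions in `S̃_n`. -/
def BruhatCovI (n : ℕ) (y z : Equiv.Perm ℤ) : Prop :=
  IsAffine n y ∧ IsAffine n z ∧ y⁻¹ = y ∧ z⁻¹ = z ∧
  BruhatLE n y z ∧ y ≠ z ∧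
  ∀ w : Equiv.Perm ℤ, IsAffine n w → w⁻¹ = w →
    BruhatLE n y w → BruhatLE n w z → w = y ∨ w = z

/-- Strict dominance order on partitions (written as weakly decreasing functions). -/
def DomLT (p q : ℕ → ℕ) : Prop :=
  p ≠ q ∧ ∀ k : ℕ, ∑ i ∈ Finset.range k, p i ≤ ∑ i ∈ Finset.range k, q i

/-- The shape `λ(π)`: the transpose of the partition sorting the code of `π⁻¹`,
recorded as the weakly decreasing function `k ↦ λ(π)_{k+1}`. -/
noncomputable def affShape (n : ℕ) (π : Equiv.Perm ℤ) : ℕ → ℕ :=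
  fun k => Multiset.countP (fun x => k < x)
    ((Finset.Icc (1 : ℤ) (n : ℤ)).val.map (codeEntry π⁻¹))

/-- The shape `μ(z)`: the transpose of the partition sorting the involution code of `z`,
recorded as the weakly decreasing function `k ↦ μ(z)_{k+1}`. -/
noncomputable def invShape (n : ℕ) (z : Equiv.Perm ℤ) : ℕ → ℕ :=
  fun k => Multiset.countP (fun x => k < x)
    ((Finset.Icc (1 : ℤ) (n : ℤ)).val.map (icodeEntry z))

/-- The weakly decreasing rearrangement of a multiset of naturals, padded by zeros. -/
noncomputable def rearr (s : Multiset ℕ) : ℕ → ℕ :=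
  fun k => ((s.sort (· ≤ ·)).reverse).getD k 0

/-- Remove the entries of a list of integers that repeat an earlier residue mod `n`. -/
def dedupMod (n : ℕ) : List ℤ → List ℤ
  | [] => []
  | x :: xs => x :: dedupMod n (xs.filter fun y => (y - x) % (n : ℤ) ≠ 0)
termination_by l => l.length
decreasing_by
  simp only [List.length_cons, List.length_unattach]
  exact Nat.lt_succ_of_le ((List.length_filter_le _ _).trans_eq (by simp))

/-- The window `[[z(a₁), a₁, z(a₂), a₂, …]]` of `α_min(z)⁻¹`, where `a₁ < a₂ < ⋯`
are the elements `a ∈ [n]` with `a ≤ z(a)`. -/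
noncomputable def aminWindow (n : ℕ) (z : Equiv.Perm ℤ) : List ℤ :=
  dedupMod n
    ((((Finset.Icc (1 : ℤ) (n : ℤ)).sort (· ≤ ·)).filter fun a => a ≤ z a).flatMap
      fun a => [z a, a])

/-- Cyclically decreasing elements of `S̃_n`. -/
def IsCycDec (n : ℕ) (π : Equiv.Perm ℤ) : Prop :=
  ∃ w : List ℤ,
    (∀ x ∈ w, 1 ≤ x ∧ x ≤ (n : ℤ)) ∧ (w.map (affS n)).prod = π ∧
    w.length = wordLength n π ∧
    w.Pairwise fun a b => (a + 1 - b) % (n : ℤ) ≠ 0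

/-- The coefficient of the monomial `∏ₖ xₖ₊₁^(α k)` in Lam's affine Stanley symmetric
function `F_π`: the number of length-additive factorizations of `π` into cyclically
decreasing factors of lengths prescribed by `α`. -/
noncomputable def stanleyCoeff (n : ℕ) (π : Equiv.Perm ℤ) (α : ℕ →₀ ℕ) : ℕ :=
  Nat.card {f : ℕ → Equiv.Perm ℤ //
    (∀ k, IsCycDec n (f k)) ∧ (∀ k, wordLength n (f k) = α k) ∧
    (∑ k ∈ α.support, α k) = wordLength n π ∧
    ∃ N : ℕ, (∀ k, N ≤ k → f k = 1) ∧ ((List.range N).map f).prod = π}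

/-- The set `Φ⁻_r(y)` of Bruhat covers of `y` of the form `τⁿ_{i r}(y)` with `i < r`
and `i ∉ {r, y(r)} + nℤ`. -/
def PhiMinus (n : ℕ) (τ : ℤ → ℤ → Equiv.Perm ℤ → Equiv.Perm ℤ)
    (y : Equiv.Perm ℤ) (r : ℤ) : Set (Equiv.Perm ℤ) :=
  {z | BruhatCovI n y z ∧ ∃ i : ℤ, i < r ∧ (i - r) % (n : ℤ) ≠ 0 ∧
    (i - y r) % (n : ℤ) ≠ 0 ∧ z = τ i r y}

/-- The set `Φ⁺_r(y)` of Bruhat covers of `y` of the form `τⁿ_{r j}(y)` with `r < j`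
and `j ∉ {r, y(r)} + nℤ`. -/
def PhiPlus (n : ℕ) (τ : ℤ → ℤ → Equiv.Perm ℤ → Equiv.Perm ℤ)
    (y : Equiv.Perm ℤ) (r : ℤ) : Set (Equiv.Perm ℤ) :=
  {z | BruhatCovI n y z ∧ ∃ j : ℤ, r < j ∧ (j - r) % (n : ℤ) ≠ 0 ∧
    (j - y r) % (n : ℤ) ≠ 0 ∧ z = τ r j y}

/-- The affine symmetric group as a subtype of `Equiv.Perm ℤ`. -/
abbrev AffPerm (n : ℕ) := {π : Equiv.Perm ℤ // IsAffine n π}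

/-- The coproduct `Δ(π) = Σ_{π ≐ π'π''} π' ⊗ π''` on `ℚ S̃_n`. -/
noncomputable def affComul (n : ℕ) :
    (AffPerm n →₀ ℚ) →ₗ[ℚ] TensorProduct ℚ (AffPerm n →₀ ℚ) (AffPerm n →₀ ℚ) :=
  Finsupp.lift _ ℚ _ fun π : AffPerm n =>
    ∑ᶠ p ∈ {p : AffPerm n × AffPerm n |
        p.1.val * p.2.val = π.val ∧
        wordLength n π.val = wordLength n p.1.val + wordLength n p.2.val},
      (Finsupp.single p.1 (1 : ℚ)) ⊗ₜ[ℚ] (Finsupp.single p.2 (1 : ℚ))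

private lemma intMod_cases {m d : ℤ} (hm : 0 < m) (h : d % m = 0) :
    d = 0 ∨ m ≤ d ∨ d ≤ -m := by
  rcases Int.dvd_of_emod_eq_zero h with ⟨c, rfl⟩
  rcases lt_trichotomy c 0 with hc | hc | hc
  · right; right; nlinarith
  · left; simp [hc]
  · right; left; nlinarith

private lemma intMod_ne {m d : ℤ} (hm : 0 < m) (h1 : -m < d) (h2 : d < m)
    (h3 : d ≠ 0) : d % m ≠ 0 := by
  intro h
  rcases intMod_cases hm h with h' | h' | h' <;> omega

private lemma affTFun_s1 {n : ℕ} {i k : ℤ} (h : (k - i) % (n : ℤ) = 0) :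
    affTFun n i (i + 1) k = k + 1 := by
  simp only [affTFun]
  rw [if_pos h]; ring

private lemma affTFun_s2 {n : ℕ} {i k : ℤ} (h : ¬ (k - i) % (n : ℤ) = 0)
    (h2 : (k - i - 1) % (n : ℤ) = 0) : affTFun n i (i + 1) k = k - 1 := by
  have e : k - (i + 1) = k - i - 1 := by ring
  simp only [affTFun]
  rw [if_neg h, e, if_pos h2]; ring

private lemma affTFun_s3 {n : ℕ} {i k : ℤ} (h : ¬ (k - i) % (n : ℤ) = 0)
    (h2 : ¬ (k - i - 1) % (n : ℤ) = 0) : affTFun n i (i + 1) k = k := by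
  have e : k - (i + 1) = k - i - 1 := by ring
  simp only [affTFun]
  rw [if_neg h, e, if_neg h2]

private lemma affTFun_period {n : ℕ} (i k : ℤ) :
    affTFun n i (i + 1) (k + (n : ℤ)) = affTFun n i (i + 1) k + n := by
  have e1 : (k + (n : ℤ) - i) % (n : ℤ) = (k - i) % n := by
    have e : k + (n : ℤ) - i = (k - i) + n * 1 := by ring
    rw [e, Int.add_mul_emod_self_left]
  have e2 : (k + (n : ℤ) - i - 1) % (n : ℤ) = (k - i - 1) % n := by
    have e : k + (n : ℤ) - i - 1 = (k - i - 1) + n * 1 := by ring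
    rw [e, Int.add_mul_emod_self_left]
  by_cases h1 : (k - i) % (n : ℤ) = 0
  · rw [affTFun_s1 (by rw [e1]; exact h1), affTFun_s1 h1]; ring
  · by_cases h2 : (k - i - 1) % (n : ℤ) = 0
    · rw [affTFun_s2 (by rw [e1]; exact h1) (by rw [e2]; exact h2),
        affTFun_s2 h1 h2]; ring
    · rw [affTFun_s3 (by rw [e1]; exact h1) (by rw [e2]; exact h2),
        affTFun_s3 h1 h2]

private lemma codeEntry_period {n : ℕ} (π : Equiv.Perm ℤ)
    (hp : ∀ j : ℤ, π (j + (n : ℤ)) = π j + n) (k : ℤ) :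
    codeEntry π (k + (n : ℤ)) = codeEntry π k := by
  simp only [codeEntry]
  refine (Nat.card_congr (Equiv.subtypeEquiv (Equiv.addRight (n : ℤ))
    fun j => ?_)).symm
  simp only [Equiv.coe_addRight]
  rw [hp j, hp k]
  omega

/-- if `i ∈ [n]` is a descent of `π`, then the code of `π s_i` is obtained
from the code of `π` by replacing the entries in positions `i` and `i+1` (mod `n`)
by `c_{i+1}` and `c_i - 1`. -/
theorem code_of_mul_descent (n : ℕ) (hn : 0 < n)
    (π : Equiv.Perm ℤ) (hπ : IsAffine n π)
    (i : ℤ) (hi1 : 1 ≤ i) (hi2 : i ≤ n) (hdes : π (i + 1) < π i) :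
    codeEntry (π * affS n i) i = codeEntry π (if i = (n : ℤ) then 1 else i + 1) ∧
    codeEntry (π * affS n i) (if i = (n : ℤ) then 1 else i + 1) = codeEntry π i - 1 ∧
    ∀ k : ℤ, 1 ≤ k → k ≤ n → k ≠ i → k ≠ (if i = (n : ℤ) then 1 else i + 1) →
      codeEntry (π * affS n i) k = codeEntry π k := by
  by_cases hn1 : n = 1
  · exfalso
    subst hn1
    have h := hπ.1 i
    push_cast at h
    omega
  have hm0 : (0 : ℤ) < (n : ℤ) := by exact_mod_cast hn
  have hm2 : (2 : ℤ) ≤ (n : ℤ) := by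
    have : 2 ≤ n := by omega
    exact_mod_cast this
  have h1mod : (1 : ℤ) % (n : ℤ) = 1 := Int.emod_eq_of_lt (by norm_num) (by omega)
  have hne1 : ¬ ((i + 1 - i) % (n : ℤ) = 0) := by
    have e : i + 1 - i = 1 := by ring
    rw [e, h1mod]; norm_num
  have hinv : Function.Involutive (affTFun n i (i + 1)) := affTFun_involutive hne1
  have happly : ∀ k : ℤ, affS n i k = affTFun n i (i + 1) k := by
    intro k
    rw [affS, affT, dif_neg hne1]
    rfl
  have hfi : affTFun n i (i + 1) i = i + 1 := affTFun_s1 (by simp)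
  have hfi1 : affTFun n i (i + 1) (i + 1) = i := by
    rw [affTFun_s2 hne1 (by have e : i + 1 - i - 1 = 0 := by ring
                            rw [e, Int.zero_emod])]
    ring
  have hswap : ∀ (p q : ℤ → Prop), (∀ x, p x ↔ q x) →
      Nat.card {x : ℤ // p x} = Nat.card {x : ℤ // q x} :=
    fun p q h => Nat.card_congr (Equiv.subtypeEquivRight h)
  have hcode : ∀ k C : ℤ, π (affTFun n i (i + 1) k) = C →
      codeEntry (π * affS n i) k
        = Nat.card {j : ℤ // k < affTFun n i (i + 1) j ∧ π j < C} := by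
    intro k C hC
    simp only [codeEntry]
    refine Nat.card_congr (Equiv.subtypeEquiv (affS n i) fun j => ?_)
    simp only [Equiv.Perm.mul_apply, happly, hinv j, hC]
  have hb1 : codeEntry (π * affS n i) i = codeEntry π (i + 1) := by
    rw [hcode i (π (i + 1)) (by rw [hfi])]
    simp only [codeEntry]
    refine hswap _ _ fun j => ?_
    by_cases ha : (j - i) % (n : ℤ) = 0
    · rcases intMod_cases hm0 ha with h0 | h0 | h0
      · have hj : j = i := by omega
        subst hj
        rw [affTFun_s1 ha]
        omega
      · rw [affTFun_s1 ha]; omega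
      · rw [affTFun_s1 ha]; omega
    · by_cases hb : (j - i - 1) % (n : ℤ) = 0
      · rw [affTFun_s2 ha hb]; omega
      · have hji : j ≠ i + 1 := by
          rintro rfl
          exact hb (by have e : i + 1 - i - 1 = 0 := by ring
                       rw [e, Int.zero_emod])
        rw [affTFun_s3 ha hb]; omega
  have hb2 : codeEntry (π * affS n i) (i + 1) = codeEntry π i - 1 := by
    rw [hcode (i + 1) (π i) (by rw [hfi1])]
    have hmid : Nat.card {j : ℤ // i + 1 < affTFun n i (i + 1) j ∧ π j < π i}
        = Nat.card {j : ℤ // (i < j ∧ π j < π i) ∧ j ≠ i + 1} := by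
      refine hswap _ _ fun j => ?_
      by_cases ha : (j - i) % (n : ℤ) = 0
      · have hji : j ≠ i + 1 := by
          rintro rfl
          rw [(by ring : i + 1 - i = 1), h1mod] at ha
          norm_num at ha
        rw [affTFun_s1 ha]; omega
      · by_cases hb : (j - i - 1) % (n : ℤ) = 0
        · rw [affTFun_s2 ha hb]
          rcases intMod_cases hm0 hb with h0 | h0 | h0 <;> omega
        · have hji : j ≠ i + 1 := by
            rintro rfl
            exact hb (by have e : i + 1 - i - 1 = 0 := by ring
                         rw [e, Int.zero_emod])
          rw [affTFun_s3 ha hb]; omega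
    rw [hmid]
    have e1 : Nat.card {j : ℤ // (i < j ∧ π j < π i) ∧ j ≠ i + 1}
        = ({j : ℤ | i < j ∧ π j < π i} \ {i + 1}).ncard := by
      rw [← Nat.card_coe_set_eq]
      exact hswap _ _ fun j => by
        simp [Set.mem_diff, Set.mem_setOf_eq, and_assoc]
    have hcoe : Nat.card {j : ℤ // i < j ∧ π j < π i}
        = ({j : ℤ | i < j ∧ π j < π i}).ncard :=
      Nat.card_coe_set_eq {j : ℤ | i < j ∧ π j < π i}
    have hmem : (i + 1) ∈ {j : ℤ | i < j ∧ π j < π i} := ⟨by omega, hdes⟩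
    by_cases hfin : {j : ℤ | i < j ∧ π j < π i}.Finite
    · rw [e1, Set.ncard_diff_singleton_of_mem hmem]
      simp only [codeEntry]
      rw [hcoe]
    · have hinf : ({j : ℤ | i < j ∧ π j < π i}).Infinite := hfin
      have hinf2 : ({j : ℤ | i < j ∧ π j < π i} \ {i + 1}).Infinite :=
        hinf.diff (Set.finite_singleton _)
      rw [e1, hinf2.ncard]
      simp only [codeEntry]
      rw [hcoe, hinf.ncard]
  have hσp : ∀ j : ℤ, (π * affS n i) (j + (n : ℤ)) = (π * affS n i) j + n := by
    intro j
    simp only [Equiv.Perm.mul_apply, happly]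
    rw [affTFun_period, hπ.1]
  have hb3 : ∀ k : ℤ, (k - i) % (n : ℤ) ≠ 0 → (k - i - 1) % (n : ℤ) ≠ 0 →
      codeEntry (π * affS n i) k = codeEntry π k := by
    intro k hk1 hk2
    rw [hcode k (π k) (by rw [affTFun_s3 hk1 hk2])]
    simp only [codeEntry]
    refine hswap _ _ fun j => ?_
    by_cases ha : (j - i) % (n : ℤ) = 0
    · have hjk : j ≠ k := by rintro rfl; exact hk1 ha
      rw [affTFun_s1 ha]; omega
    · by_cases hb : (j - i - 1) % (n : ℤ) = 0
      · have hjk : j ≠ k + 1 := by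
          rintro rfl
          exact hk1 (by have e : k + 1 - i - 1 = k - i := by ring
                        rwa [e] at hb)
        rw [affTFun_s2 ha hb]; omega
      · rw [affTFun_s3 ha hb]
  refine ⟨?_, ?_, ?_⟩
  · by_cases hni : i = (n : ℤ)
    · rw [if_pos hni, hb1]
      have e : i + 1 = 1 + (n : ℤ) := by omega
      rw [e]
      exact codeEntry_period π hπ.1 1
    · rw [if_neg hni]; exact hb1
  · by_cases hni : i = (n : ℤ)
    · rw [if_pos hni, ← hb2]
      have e : i + 1 = 1 + (n : ℤ) := by omega
      rw [e, codeEntry_period _ hσp 1]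
    · rw [if_neg hni]; exact hb2
  · intro k hk1 hk2 hk3 hk4
    apply hb3
    · exact intMod_ne hm0 (by omega) (by omega) (by omega)
    · by_cases hni : i = (n : ℤ)
      · rw [if_pos hni] at hk4
        exact intMod_ne hm0 (by omega) (by omega) (by omega)
      · rw [if_neg hni] at hk4
        exact intMod_ne hm0 (by omega) (by omega) (by omega)
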